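/- Converse of the Weyl ball theorem: Let R ≻ 0 be Hermitian, and suppose ρ_d := SᴴR⁻¹S - T ⪰ 0 with T Hermitian. For any contractive n×n matrix X, the matrix G = R⁻¹S + R^{-1/2} X ρ_d^{1/2} satisfies -GᴴRG + GᴴS + SᴴG - T ⪰ 0. -/

import Mathlib

open ComplexOrder Matrix

/-- The positive semidefinite square root of a positive semidefinite matrix
(the definition `Matrix.PosSemidef.sqrt` of the older Mathlib, removed since). -/
noncomputable def Matrix.PosSemidef.sqrt {n : Type*} [Fintype n] [DecidableEq n] {𝕜 : Type*}
    [RCLike 𝕜] {A : Matrix n n 𝕜} (hA : A.PosSemidef) : Matrix n n 𝕜 :=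
  (hA.1.eigenvectorUnitary : Matrix n n 𝕜) * diagonal ((↑) ∘ (√·) ∘ hA.1.eigenvalues) *
    (star hA.1.eigenvectorUnitary : Matrix n n 𝕜)

theorem Matrix.PosSemidef.sqrt_mul_self {n : Type*} [Fintype n] [DecidableEq n] {𝕜 : Type*}
    [RCLike 𝕜] {A : Matrix n n 𝕜} (hA : A.PosSemidef) : hA.sqrt * hA.sqrt = A := by
  have hU : (star hA.1.eigenvectorUnitary : Matrix n n 𝕜) *
      (hA.1.eigenvectorUnitary : Matrix n n 𝕜) = 1 := Unitary.coe_star_mul_self _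
  conv_rhs => rw [hA.1.spectral_theorem]
  unfold Matrix.PosSemidef.sqrt
  rw [show ∀ a b c d e f : Matrix n n 𝕜, a * b * c * (d * e * f) = a * (b * (c * d) * e) * f by
    intros; simp only [Matrix.mul_assoc], hU, Matrix.mul_one, diagonal_mul_diagonal]
  simp only [Function.comp_def, ← RCLike.ofReal_mul,
    fun i => Real.mul_self_sqrt (hA.eigenvalues_nonneg i), Unitary.conjStarAlgAut_apply]

theorem Matrix.PosSemidef.sqrt_isHermitian {n : Type*} [Fintype n] [DecidableEq n] {𝕜 : Type*}
    [RCLike 𝕜] {A : Matrix n n 𝕜} (hA : A.PosSemidef) : hA.sqrt.IsHermitian := by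
  unfold Matrix.PosSemidef.sqrt IsHermitian
  rw [conjTranspose_mul, conjTranspose_mul, diagonal_conjTranspose, Matrix.mul_assoc]
  rw [show star (RCLike.ofReal ∘ (fun x : ℝ => √x) ∘ hA.1.eigenvalues) =
      ((RCLike.ofReal ∘ (fun x : ℝ => √x) ∘ hA.1.eigenvalues) : n → 𝕜) from
    funext fun i => by simp]
  simp only [← star_eq_conjTranspose, star_star]

/-- converse of the Weyl ball theorem: for any contraction X,
G = R⁻¹S + R^{-1/2} X ρ_d^{1/2} satisfies -GᴴRG + GᴴS + SᴴG - T ⪰ 0. -/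
theorem weyl_ball_converse (n : ℕ) (R S T X : Matrix (Fin n) (Fin n) ℂ)
    (hR : R.PosDef) (hT : T.IsHermitian)
    (hρ : (Sᴴ * R⁻¹ * S - T).PosSemidef)
    (hX : (1 - Xᴴ * X).PosSemidef) :
    (-((R⁻¹ * S + (hR.posSemidef.sqrt)⁻¹ * X * hρ.sqrt)ᴴ * R *
          (R⁻¹ * S + (hR.posSemidef.sqrt)⁻¹ * X * hρ.sqrt)) +
        (R⁻¹ * S + (hR.posSemidef.sqrt)⁻¹ * X * hρ.sqrt)ᴴ * S +
        Sᴴ * (R⁻¹ * S + (hR.posSemidef.sqrt)⁻¹ * X * hρ.sqrt) - T).PosSemidef := by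
  set Q := hR.posSemidef.sqrt with hQdef
  set P := hρ.sqrt with hPdef
  have hQQ : Q * Q = R := hR.posSemidef.sqrt_mul_self
  have hPP : P * P = Sᴴ * R⁻¹ * S - T := hρ.sqrt_mul_self
  have hQunit : IsUnit Q.det := by
    have : IsUnit (Q.det * Q.det) := by
      rw [← Matrix.det_mul, hQQ]; exact hR.isUnit.map Matrix.detMonoidHom
    exact (IsUnit.mul_iff.mp this).1
  have hRunit : IsUnit R.det := hR.isUnit.map Matrix.detMonoidHom
  have hQH : Qᴴ = Q := hR.posSemidef.sqrt_isHermitian.eq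
  have hPH : Pᴴ = P := hρ.sqrt_isHermitian.eq
  have hQiH : Q⁻¹ᴴ = Q⁻¹ := by rw [Matrix.conjTranspose_nonsing_inv, hQH]
  have hRiH : R⁻¹ᴴ = R⁻¹ := by rw [Matrix.conjTranspose_nonsing_inv, hR.isHermitian.eq]
  have h1 : ∀ Y : Matrix (Fin n) (Fin n) ℂ, R⁻¹ * (R * Y) = Y := fun Y => by
    rw [← Matrix.mul_assoc, Matrix.nonsing_inv_mul _ hRunit, Matrix.one_mul]
  have h2 : ∀ Y : Matrix (Fin n) (Fin n) ℂ, R * (R⁻¹ * Y) = Y := fun Y => by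
    rw [← Matrix.mul_assoc, Matrix.mul_nonsing_inv _ hRunit, Matrix.one_mul]
  have h3 : ∀ Y : Matrix (Fin n) (Fin n) ℂ, Q⁻¹ * (R * (Q⁻¹ * Y)) = Y := fun Y => by
    rw [← hQQ, Matrix.mul_assoc Q Q, ← Matrix.mul_assoc Q Q⁻¹,
      Matrix.mul_nonsing_inv _ hQunit, Matrix.one_mul, ← Matrix.mul_assoc,
      Matrix.nonsing_inv_mul _ hQunit, Matrix.one_mul]
  have key : (-((R⁻¹ * S + Q⁻¹ * X * P)ᴴ * R * (R⁻¹ * S + Q⁻¹ * X * P)) +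
        (R⁻¹ * S + Q⁻¹ * X * P)ᴴ * S + Sᴴ * (R⁻¹ * S + Q⁻¹ * X * P) - T)
      = P * (1 - Xᴴ * X) * Pᴴ := by
    rw [hPH]
    simp only [Matrix.conjTranspose_add, Matrix.conjTranspose_mul, hPH, hQiH, hRiH,
      Matrix.mul_add, Matrix.add_mul, Matrix.mul_sub, Matrix.sub_mul, Matrix.mul_one,
      Matrix.one_mul, Matrix.mul_assoc, h1, h2, h3]
    rw [hPP]
    simp only [Matrix.mul_assoc]
    abel
  rw [key]
  exact hX.mul_mul_conjTranspose_same P
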